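/- Let B ⊆ ℕ be introreducible and let f : ℕ → ℕ be a function. If there is an infinite set Y ⊆ B that is computably enumerable relative to f (i.e., Y is the domain of a partial function that is partial recursive in f), then B is Turing reducible to f. -/

import Mathlib

/-- `NatRecursiveIn O f` means the partial function `f` is partial recursive in the
(total) oracle `O`. -/
inductive NatRecursiveIn (O : ℕ → ℕ) : (ℕ →. ℕ) → Prop
  | zero : NatRecursiveIn O (pure 0)
  | succ : NatRecursiveIn O Nat.succ
  | left : NatRecursiveIn O ↑fun n : ℕ => n.unpair.1
  | right : NatRecursiveIn O ↑fun n : ℕ => n.unpair.2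
  | oracle : NatRecursiveIn O ↑O
  | pair {f g} : NatRecursiveIn O f → NatRecursiveIn O g →
      NatRecursiveIn O fun n => Nat.pair <$> f n <*> g n
  | comp {f g} : NatRecursiveIn O f → NatRecursiveIn O g →
      NatRecursiveIn O fun n => g n >>= f
  | prec {f g} : NatRecursiveIn O f → NatRecursiveIn O g →
      NatRecursiveIn O (Nat.unpaired fun a n =>
        n.rec (f a) fun y IH => do let i ← IH; g (Nat.pair a (Nat.pair y i)))
  | rfind {f} : NatRecursiveIn O f →
      NatRecursiveIn O fun a => Nat.rfind fun n => (fun m => m = 0) <$> f (Nat.pair a n)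

/-- Turing reducibility between total functions on `ℕ`. -/
def NatTuringReducible (f g : ℕ → ℕ) : Prop := NatRecursiveIn g ↑f

/-- Turing equivalence of total functions on `ℕ`. -/
def NatTuringEquivalent (f g : ℕ → ℕ) : Prop := NatTuringReducible f g ∧ NatTuringReducible g f

theorem NatTuringReducible.refl (f : ℕ → ℕ) : NatTuringReducible f f := NatRecursiveIn.oracle

theorem NatRecursiveIn.trans' {f : ℕ →. ℕ} {g h : ℕ → ℕ}
    (hf : NatRecursiveIn g f) (hg : NatTuringReducible g h) : NatRecursiveIn h f := by
  induction hf with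
  | zero => exact .zero
  | succ => exact .succ
  | left => exact .left
  | right => exact .right
  | oracle => exact hg
  | pair _ _ ih₁ ih₂ => exact .pair ih₁ ih₂
  | comp _ _ ih₁ ih₂ => exact .comp ih₁ ih₂
  | prec _ _ ih₁ ih₂ => exact .prec ih₁ ih₂
  | rfind _ ih => exact .rfind ih

theorem NatTuringReducible.trans {f g h : ℕ → ℕ}
    (h₁ : NatTuringReducible f g) (h₂ : NatTuringReducible g h) : NatTuringReducible f h :=
  NatRecursiveIn.trans' h₁ h₂

/-- The setoid of Turing equivalence. -/
def turingSetoid : Setoid (ℕ → ℕ) :=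
  ⟨NatTuringEquivalent,
    fun f => ⟨.refl f, .refl f⟩,
    fun ⟨h₁, h₂⟩ => ⟨h₂, h₁⟩,
    fun ⟨a₁, a₂⟩ ⟨b₁, b₂⟩ => ⟨a₁.trans b₁, b₂.trans a₂⟩⟩

/-- Turing degrees. -/
def NatTuringDegree : Type := Quotient turingSetoid

/-- The Turing degree of a total function. -/
def NatTuringDegree.deg (f : ℕ → ℕ) : NatTuringDegree := Quotient.mk turingSetoid f

instance : LE NatTuringDegree :=
  ⟨fun d₁ d₂ =>
    Quotient.liftOn₂ d₁ d₂ NatTuringReducible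
      (fun _ _ _ _ h h' =>
        propext ⟨fun hr => (h.2.trans hr).trans h'.1, fun hr => (h.1.trans hr).trans h'.2⟩)⟩

instance : LT NatTuringDegree := ⟨fun d₁ d₂ => d₁ ≤ d₂ ∧ ¬d₂ ≤ d₁⟩

/-- The least Turing degree. -/
def NatTuringDegree.zero : NatTuringDegree := NatTuringDegree.deg fun _ => 0

/-- A partial function is computable in a Turing degree if it is recursive in some
(equivalently, any) representative of that degree. -/
def NatTuringDegree.ComputableIn (d : NatTuringDegree) (f : ℕ →. ℕ) : Prop :=
  Quotient.liftOn d (fun g => NatRecursiveIn g f)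
    (fun _ _ h => propext ⟨fun hr => hr.trans' h.1, fun hr => hr.trans' h.2⟩)

open Classical in
/-- The characteristic function of a set of naturals. -/
noncomputable def charFun (A : Set ℕ) : ℕ → ℕ := fun n => if n ∈ A then 1 else 0

/-- Turing reducibility between sets of naturals. -/
noncomputable def SetTuringReducible (A B : Set ℕ) : Prop :=
  NatTuringReducible (charFun A) (charFun B)

/-- The Turing degree of a set of naturals. -/
noncomputable def NatTuringDegree.degSet (A : Set ℕ) : NatTuringDegree :=
  NatTuringDegree.deg (charFun A)

/-- `R` is `d`-computably reducible to `S`. -/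
def ReducibleIn (d : NatTuringDegree) (R S : ℕ → ℕ → Prop) : Prop :=
  ∃ f : ℕ → ℕ, d.ComputableIn ↑f ∧ ∀ x y, R x y ↔ S (f x) (f y)

/-- The reducibility spectrum of the pair `(R, S)`. -/
def SpecRed (R S : ℕ → ℕ → Prop) : Set NatTuringDegree := {d | ReducibleIn d R S}

/-- The bi-reducibility spectrum of the pair `(R, S)`. -/
def SpecBired (R S : ℕ → ℕ → Prop) : Set NatTuringDegree :=
  {d | ReducibleIn d R S ∧ ReducibleIn d S R}

/-- The equivalence relation generated by a set `A`: two numbers are equivalent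
iff they are equal or both belong to `A`. -/
def genRel (A : Set ℕ) : ℕ → ℕ → Prop := fun x y => x = y ∨ (x ∈ A ∧ y ∈ A)

/-- A ceer: an equivalence relation whose set of pairs is computably enumerable. -/
def Ceer (R : ℕ → ℕ → Prop) : Prop :=
  Equivalence R ∧ REPred fun p : ℕ × ℕ => R p.1 p.2

/-- A computably enumerable set of naturals. -/
def CePred (A : Set ℕ) : Prop := REPred (· ∈ A)

/-- A partial transversal of `R`: a set any two distinct elements of which are
`R`-inequivalent. -/
def PartialTransversal (R : ℕ → ℕ → Prop) (A : Set ℕ) : Prop :=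
  ∀ x ∈ A, ∀ y ∈ A, x ≠ y → ¬R x y

/-- An introreducible set: an infinite set computable from each of its infinite subsets. -/
def Introreducible (B : Set ℕ) : Prop :=
  B.Infinite ∧ ∀ C : Set ℕ, C ⊆ B → C.Infinite → SetTuringReducible B C

namespace Stmt7

inductive CodeO : Type
  | zero | succ | left | right | oracle
  | pair : CodeO → CodeO → CodeO
  | comp : CodeO → CodeO → CodeO
  | prec : CodeO → CodeO → CodeO
  | rfind : CodeO → CodeO

def evalo (Or : ℕ →. ℕ) : CodeO → ℕ →. ℕ
  | .zero => pure 0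
  | .succ => ↑Nat.succ
  | .left => ↑fun n : ℕ => n.unpair.1
  | .right => ↑fun n : ℕ => n.unpair.2
  | .oracle => Or
  | .pair cf cg => fun n => Nat.pair <$> evalo Or cf n <*> evalo Or cg n
  | .comp cf cg => fun n => evalo Or cg n >>= evalo Or cf
  | .prec cf cg => Nat.unpaired fun a n =>
      n.rec (evalo Or cf a) fun y IH => do let i ← IH; evalo Or cg (Nat.pair a (Nat.pair y i))
  | .rfind cf => fun a => Nat.rfind fun n => (fun m => m = 0) <$> evalo Or cf (Nat.pair a n)

theorem exists_codeO {O : ℕ → ℕ} {q : ℕ →. ℕ} (h : NatRecursiveIn O q) :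
    ∃ c : CodeO, evalo ↑O c = q := by
  induction h with
  | zero => exact ⟨.zero, rfl⟩
  | succ => exact ⟨.succ, rfl⟩
  | left => exact ⟨.left, rfl⟩
  | right => exact ⟨.right, rfl⟩
  | oracle => exact ⟨.oracle, rfl⟩
  | pair _ _ ih₁ ih₂ =>
      obtain ⟨c₁, rfl⟩ := ih₁; obtain ⟨c₂, rfl⟩ := ih₂; exact ⟨.pair c₁ c₂, rfl⟩
  | comp _ _ ih₁ ih₂ =>
      obtain ⟨c₁, rfl⟩ := ih₁; obtain ⟨c₂, rfl⟩ := ih₂; exact ⟨.comp c₁ c₂, rfl⟩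
  | prec _ _ ih₁ ih₂ =>
      obtain ⟨c₁, rfl⟩ := ih₁; obtain ⟨c₂, rfl⟩ := ih₂; exact ⟨.prec c₁ c₂, rfl⟩
  | rfind _ ih =>
      obtain ⟨c₁, rfl⟩ := ih; exact ⟨.rfind c₁, rfl⟩

theorem evalo_prec_zero (Or : ℕ →. ℕ) (cf cg : CodeO) (a : ℕ) :
    evalo Or (.prec cf cg) (Nat.pair a 0) = evalo Or cf a := by
  simp [evalo, Nat.unpaired]

theorem evalo_prec_succ (Or : ℕ →. ℕ) (cf cg : CodeO) (a m : ℕ) :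
    evalo Or (.prec cf cg) (Nat.pair a (m + 1)) =
      evalo Or (.prec cf cg) (Nat.pair a m) >>= fun i =>
        evalo Or cg (Nat.pair a (Nat.pair m i)) := by
  simp [evalo, Nat.unpaired]

theorem mem_pair_iff {p q : Part ℕ} {v : ℕ} :
    v ∈ Nat.pair <$> p <*> q ↔ ∃ a ∈ p, ∃ b ∈ q, v = Nat.pair a b := by
  simp [Seq.seq, eq_comm]

theorem pmem_bind {p : Part ℕ} {g : ℕ →. ℕ} {v : ℕ} :
    v ∈ p >>= g ↔ ∃ a ∈ p, v ∈ g a := Part.mem_bind_iff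

theorem pbind_some (a : ℕ) (g : ℕ →. ℕ) : Part.some a >>= g = g a := Part.bind_some a g

theorem evalo_mono {O₁ O₂ : ℕ →. ℕ} (hO : ∀ m v, v ∈ O₁ m → v ∈ O₂ m) :
    ∀ (c : CodeO) (n v : ℕ), v ∈ evalo O₁ c n → v ∈ evalo O₂ c n := by
  intro c
  induction c with
  | zero => exact fun n v h => h
  | succ => exact fun n v h => h
  | left => exact fun n v h => h
  | right => exact fun n v h => h
  | oracle => exact fun n v h => hO n v h
  | pair cf cg ih₁ ih₂ =>
      intro n v h
      simp only [evalo, mem_pair_iff] at h ⊢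
      obtain ⟨a, ha, b, hb, rfl⟩ := h
      exact ⟨a, ih₁ _ _ ha, b, ih₂ _ _ hb, rfl⟩
  | comp cf cg ih₁ ih₂ =>
      intro n v h
      simp only [evalo, Part.bind_eq_bind, Part.mem_bind_iff, pmem_bind] at h ⊢
      obtain ⟨a, ha, hv⟩ := h
      exact ⟨a, ih₂ _ _ ha, ih₁ _ _ hv⟩
  | prec cf cg ih₁ ih₂ =>
      intro n
      have key : ∀ (m a v : ℕ), v ∈ evalo O₁ (.prec cf cg) (Nat.pair a m) →
          v ∈ evalo O₂ (.prec cf cg) (Nat.pair a m) := by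
        intro m
        induction m with
        | zero => intro a v h; rw [evalo_prec_zero] at h ⊢; exact ih₁ _ _ h
        | succ m ihm =>
            intro a v h
            rw [evalo_prec_succ] at h ⊢
            simp only [Part.bind_eq_bind, Part.mem_bind_iff] at h ⊢
            obtain ⟨i, hi, hv⟩ := h
            exact ⟨i, ihm _ _ hi, ih₂ _ _ hv⟩
      intro v h
      have := key n.unpair.2 n.unpair.1 v
      rw [Nat.pair_unpair] at this
      exact this h
  | rfind cf ih =>
      intro n v h
      simp only [evalo] at h ⊢
      replace h := Nat.mem_rfind.mp h
      refine Nat.mem_rfind.mpr ?_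
      obtain ⟨h1, h2⟩ := h
      refine ⟨?_, fun {m} hm => ?_⟩
      · obtain ⟨a, ha, he⟩ := (Part.mem_map_iff _).mp h1
        exact (Part.mem_map_iff _).mpr ⟨a, ih _ _ ha, he⟩
      · obtain ⟨a, ha, he⟩ := (Part.mem_map_iff _).mp (h2 hm)
        exact (Part.mem_map_iff _).mpr ⟨a, ih _ _ ha, he⟩


/-- The finite sub-oracle giving the values of `O` below `k`. -/
def segOr (O : ℕ → ℕ) (k : ℕ) : ℕ →. ℕ :=
  fun m => if m < k then Part.some (O m) else Part.none

theorem segOr_le_self (O : ℕ → ℕ) (k : ℕ) :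
    ∀ m v, v ∈ segOr O k m → v ∈ (↑O : ℕ →. ℕ) m := by
  intro m v h
  simp only [segOr] at h
  split at h
  · rw [Part.mem_some_iff] at h
    subst h
    simp [PFun.lift]
  · exact absurd h (Part.notMem_none v)

theorem segOr_mono (O : ℕ → ℕ) {k k' : ℕ} (hk : k ≤ k') :
    ∀ m v, v ∈ segOr O k m → v ∈ segOr O k' m := by
  intro m v h
  simp only [segOr] at h ⊢
  split at h
  · rename_i hm
    rw [if_pos (lt_of_lt_of_le hm hk)]; exact h
  · exact absurd h (Part.notMem_none v)

theorem exists_mono_bound {P : ℕ → ℕ → Prop}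
    (hmono : ∀ j k k', k ≤ k' → P j k → P j k') :
    ∀ {v : ℕ}, (∀ j ≤ v, ∃ k, P j k) → ∃ K, ∀ j ≤ v, P j K := by
  intro v
  induction v with
  | zero =>
      intro h
      obtain ⟨k, hk⟩ := h 0 le_rfl
      exact ⟨k, fun j hj => by interval_cases j; exact hk⟩
  | succ v ih =>
      intro h
      obtain ⟨K, hK⟩ := ih fun j hj => h j (hj.trans (Nat.le_succ v))
      obtain ⟨k, hk⟩ := h (v + 1) le_rfl
      refine ⟨max K k, fun j hj => ?_⟩
      rcases Nat.lt_succ_iff_lt_or_eq.mp (Nat.lt_succ_of_le hj) with h' | rfl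
      · exact hmono _ _ _ (le_max_left _ _) (hK j (Nat.lt_succ_iff.mp h'))
      · exact hmono _ _ _ (le_max_right _ _) hk

theorem evalo_compact (O : ℕ → ℕ) :
    ∀ (c : CodeO) (n v : ℕ), v ∈ evalo (↑O) c n → ∃ k, v ∈ evalo (segOr O k) c n := by
  intro c
  induction c with
  | zero => exact fun n v h => ⟨0, h⟩
  | succ => exact fun n v h => ⟨0, h⟩
  | left => exact fun n v h => ⟨0, h⟩
  | right => exact fun n v h => ⟨0, h⟩
  | oracle =>
      intro n v h
      refine ⟨n + 1, ?_⟩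
      simp only [evalo] at h
      simp only [evalo, segOr, if_pos (Nat.lt_succ_self n)]
      simpa using h
  | pair cf cg ih₁ ih₂ =>
      intro n v h
      simp only [evalo, mem_pair_iff] at h ⊢
      obtain ⟨a, ha, b, hb, rfl⟩ := h
      obtain ⟨k₁, h₁⟩ := ih₁ _ _ ha
      obtain ⟨k₂, h₂⟩ := ih₂ _ _ hb
      exact ⟨max k₁ k₂, a, evalo_mono (segOr_mono O (le_max_left _ _)) _ _ _ h₁,
        b, evalo_mono (segOr_mono O (le_max_right _ _)) _ _ _ h₂, rfl⟩
  | comp cf cg ih₁ ih₂ =>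
      intro n v h
      simp only [evalo, Part.bind_eq_bind, Part.mem_bind_iff, pmem_bind] at h ⊢
      obtain ⟨a, ha, hv⟩ := h
      obtain ⟨k₁, h₁⟩ := ih₂ _ _ ha
      obtain ⟨k₂, h₂⟩ := ih₁ _ _ hv
      exact ⟨max k₁ k₂, a, evalo_mono (segOr_mono O (le_max_left _ _)) _ _ _ h₁,
        evalo_mono (segOr_mono O (le_max_right _ _)) _ _ _ h₂⟩
  | prec cf cg ih₁ ih₂ =>
      intro n
      have key : ∀ (m a v : ℕ), v ∈ evalo (↑O) (.prec cf cg) (Nat.pair a m) →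
          ∃ k, v ∈ evalo (segOr O k) (.prec cf cg) (Nat.pair a m) := by
        intro m
        induction m with
        | zero =>
            intro a v h
            rw [evalo_prec_zero] at h
            obtain ⟨k, hk⟩ := ih₁ _ _ h
            exact ⟨k, by rw [evalo_prec_zero]; exact hk⟩
        | succ m ihm =>
            intro a v h
            rw [evalo_prec_succ] at h
            simp only [Part.bind_eq_bind, Part.mem_bind_iff] at h
            obtain ⟨i, hi, hv⟩ := h
            obtain ⟨k₁, h₁⟩ := ihm _ _ hi
            obtain ⟨k₂, h₂⟩ := ih₂ _ _ hv
            refine ⟨max k₁ k₂, ?_⟩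
            rw [evalo_prec_succ]
            simp only [Part.bind_eq_bind, Part.mem_bind_iff]
            exact ⟨i, evalo_mono (segOr_mono O (le_max_left _ _)) _ _ _ h₁,
              evalo_mono (segOr_mono O (le_max_right _ _)) _ _ _ h₂⟩
      intro v h
      have := key n.unpair.2 n.unpair.1 v
      rw [Nat.pair_unpair] at this
      exact this h
  | rfind cf ih =>
      intro n v h
      simp only [evalo] at h ⊢
      replace h := Nat.mem_rfind.mp h
      obtain ⟨h1, h2⟩ := h
      obtain ⟨a, ha, hea⟩ := (Part.mem_map_iff _).mp h1
      -- for each j ≤ v, we have a value of `evalo O cf (Nat.pair n j)`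
      have hval : ∀ j ≤ v, ∃ k, ∃ b, b ∈ evalo (segOr O k) cf (Nat.pair n j) ∧
          (j = v → b = a) ∧ (j < v → (decide (b = 0)) = false) := by
        intro j hj
        rcases Nat.lt_or_ge j v with hjv | hjv
        · obtain ⟨b, hb, heb⟩ := (Part.mem_map_iff _).mp (h2 hjv)
          obtain ⟨k, hk⟩ := ih _ _ hb
          exact ⟨k, b, hk, fun he => absurd he (Nat.ne_of_lt hjv), fun _ => heb⟩
        · have hjv' : j = v := le_antisymm hj hjv
          subst hjv'
          obtain ⟨k, hk⟩ := ih _ _ ha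
          exact ⟨k, a, hk, fun _ => rfl, fun hlt => absurd hlt (lt_irrefl _)⟩
      have hmono : ∀ j k k', k ≤ k' →
          (∃ b, b ∈ evalo (segOr O k) cf (Nat.pair n j) ∧
            (j = v → b = a) ∧ (j < v → (decide (b = 0)) = false)) →
          (∃ b, b ∈ evalo (segOr O k') cf (Nat.pair n j) ∧
            (j = v → b = a) ∧ (j < v → (decide (b = 0)) = false)) := by
        rintro j k k' hk ⟨b, hb, h3, h4⟩
        exact ⟨b, evalo_mono (segOr_mono O hk) _ _ _ hb, h3, h4⟩
      obtain ⟨K, hK⟩ := exists_mono_bound hmono hval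
      refine ⟨K, ?_⟩
      refine Nat.mem_rfind.mpr ?_
      constructor
      · obtain ⟨b, hb, h3, _⟩ := hK v le_rfl
        exact (Part.mem_map_iff _).mpr ⟨a, (h3 rfl) ▸ hb, hea⟩
      · intro m hm
        obtain ⟨b, hb, _, h4⟩ := hK m (le_of_lt hm)
        exact (Part.mem_map_iff _).mpr ⟨b, hb, h4 hm⟩


open Nat.Partrec (Code)
open Nat.Partrec.Code

/-- Oracle read off a number coding a (reversed) list. -/
def numOr (l : ℕ) : ℕ →. ℕ :=
  fun m => Part.ofOption ((Denumerable.ofNat (List ℕ) l).reverse[m]?)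

theorem numOr_partrec :
    Nat.Partrec fun x : ℕ => numOr x.unpair.1 x.unpair.2 := by
  have h1 : Primrec fun x : ℕ =>
      ((Denumerable.ofNat (List ℕ) x.unpair.1).reverse[x.unpair.2]?) :=
    Primrec.list_getElem?.comp
      (Primrec.list_reverse.comp ((Primrec.ofNat (List ℕ)).comp
        (Primrec.fst.comp Primrec.unpair)))
      (Primrec.snd.comp Primrec.unpair)
  exact Partrec.nat_iff.mp (Computable.ofOption h1.to_comp)

/-- A plain code computing `numOr` on paired input. -/
noncomputable def lookCode : Code :=
  (Nat.Partrec.Code.exists_code.mp numOr_partrec).choose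

theorem lookCode_eval' : Code.eval lookCode = fun x : ℕ => numOr x.unpair.1 x.unpair.2 :=
  (Nat.Partrec.Code.exists_code.mp numOr_partrec).choose_spec

theorem lookCode_eval (x : ℕ) : Code.eval lookCode x = numOr x.unpair.1 x.unpair.2 :=
  congrFun lookCode_eval' x

/-- Translation of oracle codes into plain codes taking the coded oracle list
as an extra argument. -/
noncomputable def tr : CodeO → Code
  | .zero => Code.zero
  | .succ => Code.succ.comp Code.right
  | .left => Code.left.comp Code.right
  | .right => Code.right.comp Code.right
  | .oracle => lookCode
  | .pair cf cg => (tr cf).pair (tr cg)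
  | .comp cf cg => (tr cf).comp (Code.left.pair (tr cg))
  | .prec cf cg =>
      ((tr cf).prec ((tr cg).comp
          ((Code.left.comp Code.left).pair
            ((Code.right.comp Code.left).pair Code.right)))).comp
        ((Code.left.pair (Code.left.comp Code.right)).pair (Code.right.comp Code.right))
  | .rfind cf =>
      (Code.rfind' ((tr cf).comp
          ((Code.left.comp Code.left).pair
            ((Code.right.comp Code.left).pair Code.right)))).comp
        (Code.id.pair Code.zero)

theorem eval_projpair (c₁ c₂ : Code) (x a b : ℕ)
    (h₁ : Code.eval c₁ x = Part.some a) (h₂ : Code.eval c₂ x = Part.some b) :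
    Code.eval (c₁.pair c₂) x = Part.some (Nat.pair a b) := by
  simp [Code.eval, h₁, h₂, Seq.seq]

theorem eval_left' (x : ℕ) : Code.eval Code.left x = Part.some x.unpair.1 := rfl
theorem eval_right' (x : ℕ) : Code.eval Code.right x = Part.some x.unpair.2 := rfl
theorem eval_left_pair (a b : ℕ) : Code.eval Code.left (Nat.pair a b) = Part.some a := by
  rw [eval_left', Nat.unpair_pair]
theorem eval_right_pair (a b : ℕ) : Code.eval Code.right (Nat.pair a b) = Part.some b := by
  rw [eval_right', Nat.unpair_pair]

theorem eval_comp' (c₁ c₂ : Code) (x y : ℕ) (h : Code.eval c₂ x = Part.some y) :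
    Code.eval (c₁.comp c₂) x = Code.eval c₁ y := by
  simp [Code.eval, h, pbind_some]

/-- The rearranging code used in the `prec` and `rfind` cases. -/
noncomputable def rearr (c : CodeO) : Code :=
  (tr c).comp ((Code.left.comp Code.left).pair ((Code.right.comp Code.left).pair Code.right))

theorem eval_rearr (c : CodeO) (l a b : ℕ) :
    Code.eval (rearr c) (Nat.pair (Nat.pair l a) b) =
      Code.eval (tr c) (Nat.pair l (Nat.pair a b)) := by
  refine eval_comp' _ _ _ _ ?_
  refine eval_projpair _ _ _ _ _ ?_ ?_
  · rw [eval_comp' _ _ _ (Nat.pair l a) (by rw [eval_left', Nat.unpair_pair]),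
      eval_left_pair]
  · refine eval_projpair _ _ _ _ _ ?_ ?_
    · rw [eval_comp' _ _ _ (Nat.pair l a) (by rw [eval_left', Nat.unpair_pair]),
        eval_right_pair]
    · rw [eval_right', Nat.unpair_pair]

theorem eval_rfind'_zero (c : Code) (a : ℕ) :
    Code.eval (Code.rfind' c) (Nat.pair a 0) =
      Nat.rfind fun j => (fun m => m = 0) <$> Code.eval c (Nat.pair a j) := by
  have h1 : Code.eval (Code.rfind' c) (Nat.pair a 0) =
      (Nat.rfind fun j => (fun m => m = 0) <$> Code.eval c (Nat.pair a (j + 0))).map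
        (· + 0) := by
    simp [Code.eval, Nat.unpaired, Nat.unpair_pair]
  rw [h1]
  simp only [Nat.add_zero]
  exact Part.map_id' (fun _ => rfl) _

theorem tr_eval (c : CodeO) (l n : ℕ) :
    Code.eval (tr c) (Nat.pair l n) = evalo (numOr l) c n := by
  induction c generalizing n with
  | zero => rfl
  | succ =>
      rw [tr, eval_comp' _ _ _ n (eval_right' _ ▸ by simp [Nat.unpair_pair])]
      rfl
  | left =>
      rw [tr, eval_comp' _ _ _ n (eval_right' _ ▸ by simp [Nat.unpair_pair])]
      rfl
  | right =>
      rw [tr, eval_comp' _ _ _ n (eval_right' _ ▸ by simp [Nat.unpair_pair])]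
      rfl
  | oracle =>
      rw [tr, lookCode_eval]
      simp [evalo]
  | pair cf cg ih₁ ih₂ => simp [tr, Code.eval, evalo, ih₁, ih₂]
  | comp cf cg ih₁ ih₂ =>
      apply Part.ext
      intro v
      simp only [tr, Code.eval, Part.bind_eq_bind, Part.mem_bind_iff, pmem_bind, evalo]
      constructor
      · rintro ⟨a, ha, hv⟩
        rw [mem_pair_iff] at ha
        obtain ⟨a₁, ha₁, b, hb, rfl⟩ := ha
        have ha₁' : a₁ = l := by simpa using ha₁
        subst ha₁'
        rw [ih₂] at hb
        rw [ih₁] at hv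
        exact ⟨b, hb, hv⟩
      · rintro ⟨b, hb, hv⟩
        refine ⟨Nat.pair l b, ?_, ?_⟩
        · rw [mem_pair_iff]
          exact ⟨l, by simp, b, by rw [ih₂]; exact hb, rfl⟩
        · rw [ih₁]; exact hv
  | prec cf cg ih₁ ih₂ =>
      have hre : Code.eval
          ((Code.left.pair (Code.left.comp Code.right)).pair (Code.right.comp Code.right))
          (Nat.pair l n) = Part.some (Nat.pair (Nat.pair l n.unpair.1) n.unpair.2) := by
        refine eval_projpair _ _ _ _ _ ?_ ?_
        · refine eval_projpair _ _ _ _ _ (eval_left_pair _ _) ?_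
          rw [eval_comp' _ _ _ n (eval_right' _ ▸ by simp), eval_left']
        · rw [eval_comp' _ _ _ n (eval_right' _ ▸ by simp), eval_right']
      have key : ∀ (m a : ℕ),
          Code.eval ((tr cf).prec (rearr cg)) (Nat.pair (Nat.pair l a) m) =
            evalo (numOr l) (.prec cf cg) (Nat.pair a m) := by
        intro m
        induction m with
        | zero =>
            intro a
            rw [Nat.Partrec.Code.eval_prec_zero, evalo_prec_zero, ih₁]
        | succ m ihm =>
            intro a
            rw [Nat.Partrec.Code.eval_prec_succ, evalo_prec_succ, ihm]
            apply congrArg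
            funext i
            rw [eval_rearr, ih₂]
      show Code.eval (((tr cf).prec (rearr cg)).comp _) _ = _
      rw [eval_comp' _ _ _ _ hre, key]
      rw [Nat.pair_unpair]
  | rfind cf ih =>
      have hre : Code.eval (Code.id.pair Code.zero) (Nat.pair l n) =
          Part.some (Nat.pair (Nat.pair l n) 0) := by
        refine eval_projpair _ _ _ _ _ ?_ rfl
        simp
      show Code.eval ((Code.rfind' (rearr cf)).comp _) _ = _
      rw [eval_comp' _ _ _ _ hre, eval_rfind'_zero]
      simp only [evalo]
      apply congrArg
      funext j
      rw [eval_rearr, ih]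

/-! ### Coded initial segments of the oracle -/

def rSeg (O : ℕ → ℕ) (k : ℕ) : List ℕ := (List.range k).reverse.map O

def lO (O : ℕ → ℕ) (k : ℕ) : ℕ := Encodable.encode (rSeg O k)

theorem rSeg_zero (O : ℕ → ℕ) : rSeg O 0 = [] := rfl

theorem rSeg_succ (O : ℕ → ℕ) (k : ℕ) : rSeg O (k + 1) = O k :: rSeg O k := by
  simp [rSeg, List.range_succ]

theorem lO_zero (O : ℕ → ℕ) : lO O 0 = 0 := rfl

theorem lO_succ (O : ℕ → ℕ) (k : ℕ) :
    lO O (k + 1) = Nat.pair (O k) (lO O k) + 1 := by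
  simp [lO, rSeg_succ, Encodable.encode_list_cons]

theorem rSeg_reverse (O : ℕ → ℕ) (k : ℕ) :
    (rSeg O k).reverse = (List.range k).map O := by
  simp [rSeg]

theorem numOr_lO (O : ℕ → ℕ) (k : ℕ) : numOr (lO O k) = segOr O k := by
  funext m
  simp only [numOr, lO, Denumerable.ofNat_encode, rSeg_reverse, segOr]
  rcases Nat.lt_or_ge m k with h | h
  · rw [List.getElem?_map, List.getElem?_range h]
    simp [if_pos h]
  · rw [List.getElem?_eq_none (by simpa using h)]
    simp [if_neg (Nat.not_lt.mpr h)]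

/-! ### Bounded `or` and `max` -/

def bAny (t : ℕ) (p : ℕ → Bool) : Bool := ((List.range t).map p).foldr (· || ·) false

def bMax (t : ℕ) (g : ℕ → ℕ) : ℕ := ((List.range t).map g).foldr max 0

theorem foldr_or_eq (l : List Bool) (b : Bool) :
    l.foldr (· || ·) b = (l.foldr (· || ·) false || b) := by
  induction l with
  | nil => simp
  | cons a l ih => simp [ih, Bool.or_assoc]

theorem bAny_succ (t : ℕ) (p : ℕ → Bool) :
    bAny (t + 1) p = (bAny t p || p t) := by
  simp only [bAny, List.range_succ, List.map_append, List.foldr_append]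
  rw [foldr_or_eq]
  simp

theorem bAny_iff (t : ℕ) (p : ℕ → Bool) :
    bAny t p = true ↔ ∃ s < t, p s = true := by
  induction t with
  | zero => simp [bAny]
  | succ t ih =>
      rw [bAny_succ, Bool.or_eq_true, ih]
      constructor
      · rintro (⟨s, hs, hp⟩ | hp)
        · exact ⟨s, hs.trans (Nat.lt_succ_self t), hp⟩
        · exact ⟨t, Nat.lt_succ_self t, hp⟩
      · rintro ⟨s, hs, hp⟩
        rcases Nat.lt_succ_iff_lt_or_eq.mp hs with h | rfl
        · exact Or.inl ⟨s, h, hp⟩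
        · exact Or.inr hp

theorem foldr_max_eq (l : List ℕ) (b : ℕ) :
    l.foldr max b = max (l.foldr max 0) b := by
  induction l with
  | nil => simp
  | cons a l ih => simp [ih, max_assoc]

theorem bMax_succ (t : ℕ) (g : ℕ → ℕ) :
    bMax (t + 1) g = max (bMax t g) (g t) := by
  simp only [bMax, List.range_succ, List.map_append, List.foldr_append]
  rw [foldr_max_eq]
  simp [max_comm]

theorem le_bMax (t : ℕ) (g : ℕ → ℕ) {s : ℕ} (hs : s < t) : g s ≤ bMax t g := by
  induction t with
  | zero => omega
  | succ t ih =>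
      rw [bMax_succ]
      rcases Nat.lt_succ_iff_lt_or_eq.mp hs with h | rfl
      · exact le_max_of_le_left (ih h)
      · exact le_max_right _ _

theorem bMax_le (t : ℕ) (g : ℕ → ℕ) {b : ℕ} (h : ∀ s < t, g s ≤ b) : bMax t g ≤ b := by
  induction t with
  | zero => simp [bMax]
  | succ t ih =>
      rw [bMax_succ]
      exact max_le (ih fun s hs => h s (hs.trans (Nat.lt_succ_self t)))
        (h t (Nat.lt_succ_self t))

theorem bMax_attained (t : ℕ) (g : ℕ → ℕ) (h : 0 < bMax t g) :
    ∃ s < t, g s = bMax t g := by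
  induction t with
  | zero => simp [bMax] at h
  | succ t ih =>
      rw [bMax_succ] at h ⊢
      rcases Nat.lt_or_ge (bMax t g) (g t) with h' | h'
      · exact ⟨t, Nat.lt_succ_self t, (max_eq_right (le_of_lt h')).symm⟩
      · rw [max_eq_left h'] at h ⊢
        obtain ⟨s, hs, he⟩ := ih h
        exact ⟨s, hs.trans (Nat.lt_succ_self t), he⟩

/-! ### The stage-`t` approximation of the domain -/

open Classical in
/-- `n` is seen to be in the domain of `evalo ↑O c` by stage `t`. -/
noncomputable def dD (O : ℕ → ℕ) (c : CodeO) (n t : ℕ) : Bool :=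
  bAny (t + 1) fun s => bAny (t + 1) fun k =>
    (Nat.Partrec.Code.evaln s (tr c) (Nat.pair (lO O k) n)).isSome

theorem dD_iff (O : ℕ → ℕ) (c : CodeO) (n t : ℕ) :
    dD O c n t = true ↔ ∃ s ≤ t, ∃ k ≤ t,
      (Nat.Partrec.Code.evaln s (tr c) (Nat.pair (lO O k) n)).isSome = true := by
  simp only [dD, bAny_iff, Nat.lt_succ_iff]

theorem dD_mono (O : ℕ → ℕ) (c : CodeO) (n : ℕ) {t t' : ℕ} (h : t ≤ t')
    (hd : dD O c n t = true) : dD O c n t' = true := by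
  rw [dD_iff] at hd ⊢
  obtain ⟨s, hs, k, hk, hv⟩ := hd
  exact ⟨s, hs.trans h, k, hk.trans h, hv⟩

theorem dD_sound (O : ℕ → ℕ) (c : CodeO) (n t : ℕ) (h : dD O c n t = true) :
    (evalo (↑O) c n).Dom := by
  rw [dD_iff] at h
  obtain ⟨s, _, k, _, hv⟩ := h
  obtain ⟨v, hv⟩ := Option.isSome_iff_exists.mp hv
  have h1 : v ∈ Code.eval (tr c) (Nat.pair (lO O k) n) :=
    Nat.Partrec.Code.evaln_sound (by simpa using hv)
  rw [tr_eval, numOr_lO] at h1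
  have h2 := evalo_mono (segOr_le_self O k) c n v h1
  exact Part.dom_iff_mem.mpr ⟨v, h2⟩

theorem dD_complete (O : ℕ → ℕ) (c : CodeO) (n : ℕ) (h : (evalo (↑O) c n).Dom) :
    ∃ t, dD O c n t = true := by
  obtain ⟨v, hv⟩ := Part.dom_iff_mem.mp h
  obtain ⟨k, hk⟩ := evalo_compact O c n v hv
  rw [← numOr_lO, ← tr_eval] at hk
  obtain ⟨s, hs⟩ := Nat.Partrec.Code.evaln_complete.mp hk
  refine ⟨max s k, ?_⟩
  rw [dD_iff]
  exact ⟨s, le_max_left _ _, k, le_max_right _ _, by simp [Option.mem_def.mp hs]⟩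

/-- The largest element (plus one) seen in the domain by stage `t`. -/
noncomputable def FF (O : ℕ → ℕ) (c : CodeO) (t : ℕ) : ℕ :=
  bMax (t + 1) fun n => if dD O c n t then n + 1 else 0

theorem FF_mono (O : ℕ → ℕ) (c : CodeO) : Monotone (FF O c) := by
  intro t t' h
  refine bMax_le _ _ fun s hs => ?_
  rcases hdd : dD O c s t with _ | _
  · simp
  · have h1 : dD O c s t' = true := dD_mono O c s h hdd
    have h2 : s < t' + 1 := lt_of_lt_of_le hs (by omega)
    have := le_bMax (t' + 1) (fun n => if dD O c n t' then n + 1 else 0) h2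
    simpa [FF, hdd, h1] using this

theorem FF_eq_succ (O : ℕ → ℕ) (c : CodeO) {t n : ℕ} (h : FF O c t = n + 1) :
    dD O c n t = true := by
  have h0 : 0 < bMax (t + 1) fun m => if dD O c m t then m + 1 else 0 := by
    rw [show bMax _ _ = FF O c t from rfl, h]; omega
  obtain ⟨s, _, hs⟩ := bMax_attained _ _ h0
  rw [show bMax _ _ = FF O c t from rfl, h] at hs
  by_cases hd : dD O c s t = true
  · rw [if_pos hd] at hs
    have : s = n := by omega
    exact this ▸ hd
  · rw [if_neg hd] at hs
    omega

theorem FF_ge (O : ℕ → ℕ) (c : CodeO) {t n : ℕ} (hn : n ≤ t)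
    (hd : dD O c n t = true) : n + 1 ≤ FF O c t := by
  have := le_bMax (t + 1) (fun m => if dD O c m t then m + 1 else 0)
    (show n < t + 1 by omega)
  simpa [FF, hd] using this

theorem FF_unbounded (O : ℕ → ℕ) (c : CodeO)
    (hinf : {n | (evalo (↑O) c n).Dom}.Infinite) (b : ℕ) :
    ∃ t, b + 1 ≤ FF O c t := by
  obtain ⟨n, hn, hnb⟩ := hinf.exists_gt b
  obtain ⟨t₀, ht₀⟩ := dD_complete O c n hn
  refine ⟨max n t₀, ?_⟩
  have h1 : dD O c n (max n t₀) = true := dD_mono O c n (le_max_right _ _) ht₀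
  have h2 := FF_ge O c (le_max_left n t₀) h1
  omega

/-- The set of "fresh record" elements: an infinite subset of the domain. -/
noncomputable def CC (O : ℕ → ℕ) (c : CodeO) : Set ℕ :=
  {n | ∃ t, FF O c t = n + 1 ∧ ∀ u < t, FF O c u ≤ n}

theorem CC_subset (O : ℕ → ℕ) (c : CodeO) :
    CC O c ⊆ {n | (evalo (↑O) c n).Dom} := by
  rintro n ⟨t, ht, -⟩
  exact dD_sound O c n t (FF_eq_succ O c ht)

theorem CC_infinite (O : ℕ → ℕ) (c : CodeO)
    (hinf : {n | (evalo (↑O) c n).Dom}.Infinite) : (CC O c).Infinite := by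
  apply Set.infinite_of_not_bddAbove
  rintro ⟨b, hb⟩
  -- find an element of CC greater than b
  have hex : ∃ t, b + 2 ≤ FF O c t := by
    obtain ⟨t, ht⟩ := FF_unbounded O c hinf (b + 1)
    exact ⟨t, by omega⟩
  classical
  let T := Nat.find hex
  have hT : b + 2 ≤ FF O c T := Nat.find_spec hex
  -- FF T - 1 is in CC
  obtain ⟨n, hn⟩ : ∃ n, FF O c T = n + 1 := ⟨FF O c T - 1, by omega⟩
  have hmem : n ∈ CC O c := by
    refine ⟨T, hn, fun u hu => ?_⟩
    have := Nat.find_min hex hu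
    omega
  have := hb hmem
  omega

theorem CC_mem_iff (O : ℕ → ℕ) (c : CodeO)
    (hinf : {n | (evalo (↑O) c n).Dom}.Infinite) (n : ℕ) :
    n ∈ CC O c ↔
      ∀ T, (n + 1 ≤ FF O c T ∧ ∀ u < T, ¬(n + 1 ≤ FF O c u)) → FF O c T = n + 1 := by
  constructor
  · rintro ⟨t, ht, hlt⟩ T ⟨hT1, hT2⟩
    -- T is the least stage with FF ≥ n+1 and t is a witness stage
    rcases lt_trichotomy T t with h | rfl | h
    · have := hlt T h
      omega
    · exact ht
    · -- t < T contradicts minimality since FF t = n+1 ≥ n+1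
      exact absurd (by omega : n + 1 ≤ FF O c t) (hT2 t h)
  · intro h
    have hex : ∃ t, n + 1 ≤ FF O c t := by
      obtain ⟨t, ht⟩ := FF_unbounded O c hinf n
      exact ⟨t, ht⟩
    classical
    let T := Nat.find hex
    have hT := Nat.find_spec hex
    have hmin : ∀ u < T, ¬(n + 1 ≤ FF O c u) := fun u hu => Nat.find_min hex hu
    have := h T ⟨hT, hmin⟩
    exact ⟨T, this, fun u hu => by have := hmin u hu; omega⟩

theorem CC_mem_iff' (O : ℕ → ℕ) (c : CodeO) {n T : ℕ}
    (hT1 : n + 1 ≤ FF O c T) (hT2 : ∀ u < T, ¬(n + 1 ≤ FF O c u)) :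
    n ∈ CC O c ↔ FF O c T = n + 1 := by
  constructor
  · rintro ⟨t, ht, hlt⟩
    rcases lt_trichotomy T t with h | rfl | h
    · have := hlt T h
      omega
    · exact ht
    · exact absurd (by omega : n + 1 ≤ FF O c t) (hT2 t h)
  · intro h
    exact ⟨T, h, fun u hu => by have := hT2 u hu; omega⟩

/-! ### Computability helpers -/

theorem recIn_of_partrec {O : ℕ → ℕ} {q : ℕ →. ℕ} (h : Nat.Partrec q) :
    NatRecursiveIn O q := by
  induction h with
  | zero => exact .zero
  | succ => exact .succ
  | left => exact .left
  | right => exact .right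
  | pair _ _ ih₁ ih₂ => exact .pair ih₁ ih₂
  | comp _ _ ih₁ ih₂ => exact .comp ih₁ ih₂
  | prec _ _ ih₁ ih₂ => exact .prec ih₁ ih₂
  | rfind _ ih => exact .rfind ih

theorem recIn_total {O : ℕ → ℕ} {f : ℕ → ℕ} (h : Computable f) :
    NatRecursiveIn O ↑f :=
  recIn_of_partrec (Partrec.nat_iff.mp h.partrec)

theorem recIn_of_eq {O : ℕ → ℕ} {f g : ℕ →. ℕ} (h : NatRecursiveIn O f)
    (H : ∀ n, f n = g n) : NatRecursiveIn O g := (funext H : f = g) ▸ h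

/-! ### The list of coded segments, computable in `O` by primitive recursion -/

def lList (O : ℕ → ℕ) (t : ℕ) : List ℕ := (List.range (t + 1)).reverse.map (lO O)

def LLr (O : ℕ → ℕ) (t : ℕ) : ℕ := Encodable.encode (lList O t)

theorem lList_zero (O : ℕ → ℕ) : lList O 0 = [0] := by
  simp [lList, lO_zero]

theorem lList_succ (O : ℕ → ℕ) (t : ℕ) :
    lList O (t + 1) = lO O (t + 1) :: lList O t := by
  simp [lList, List.range_succ]

theorem LLr_zero (O : ℕ → ℕ) : LLr O 0 = 1 := by
  rw [LLr, lList_zero]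
  simp [Encodable.encode_list_cons]
  rfl

theorem LLr_head (O : ℕ → ℕ) (t : ℕ) :
    (Denumerable.ofNat (List ℕ) (LLr O t)).headI = lO O t := by
  rw [LLr, Denumerable.ofNat_encode]
  cases t with
  | zero => rw [lList_zero, lO_zero]; rfl
  | succ t => rw [lList_succ]; rfl

theorem LLr_succ (O : ℕ → ℕ) (t : ℕ) :
    LLr O (t + 1) = Nat.pair (Nat.pair (O t) (lO O t) + 1) (LLr O t) + 1 := by
  rw [LLr, lList_succ, Encodable.encode_list_cons, lO_succ]
  simp [LLr, Encodable.encode_nat]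

theorem LLr_get (O : ℕ → ℕ) {k t : ℕ} (h : k ≤ t) :
    (((Denumerable.ofNat (List ℕ) (LLr O t)).reverse[k]?).getD 0) = lO O k := by
  rw [LLr, Denumerable.ofNat_encode]
  have hrev : (lList O t).reverse = (List.range (t + 1)).map (lO O) := by
    simp [lList]
  rw [hrev, List.getElem?_map,
    List.getElem?_range (by omega : k < t + 1)]
  rfl

/-- The step function for computing `LLr` by primitive recursion. -/
def llStep (O : ℕ → ℕ) : ℕ →. ℕ :=
  fun x => (Nat.pair <$> ((↑(fun z : ℕ => z.unpair.2.unpair.1) : ℕ →. ℕ) x >>= (↑O : ℕ →. ℕ))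
      <*> (↑(fun z : ℕ => z) : ℕ →. ℕ) x) >>=
    (↑(fun y : ℕ => Nat.pair
        (Nat.pair y.unpair.1
          ((Denumerable.ofNat (List ℕ) y.unpair.2.unpair.2.unpair.2).headI) + 1)
        y.unpair.2.unpair.2.unpair.2 + 1) : ℕ →. ℕ)

theorem llStep_recIn (O : ℕ → ℕ) : NatRecursiveIn O (llStep O) := by
  refine NatRecursiveIn.comp (recIn_total ?_) (NatRecursiveIn.pair (NatRecursiveIn.comp .oracle (recIn_total ?_)) (recIn_total ?_))
  · apply Primrec.to_comp
    have hsnd : Primrec fun y : ℕ => y.unpair.2.unpair.2.unpair.2 :=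
      (Primrec.snd.comp Primrec.unpair).comp
        ((Primrec.snd.comp Primrec.unpair).comp (Primrec.snd.comp Primrec.unpair))
    refine Primrec.succ.comp (Primrec₂.natPair.comp (Primrec.succ.comp
      (Primrec₂.natPair.comp (Primrec.fst.comp Primrec.unpair) ?_)) hsnd)
    exact Primrec.list_headI.comp ((Primrec.ofNat (List ℕ)).comp hsnd)
  · exact Primrec.to_comp <|
      (Primrec.fst.comp Primrec.unpair).comp (Primrec.snd.comp Primrec.unpair)
  · exact Primrec.to_comp Primrec.id

theorem llStep_val (O : ℕ → ℕ) (a y i : ℕ) :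
    llStep O (Nat.pair a (Nat.pair y i)) =
      Part.some (Nat.pair (Nat.pair (O y)
        ((Denumerable.ofNat (List ℕ) i).headI) + 1) i + 1) := by
  simp [llStep, Seq.seq, Nat.unpair_pair, PFun.coe_val, pbind_some]

/-- `LLr O` is computable in `O`. -/
theorem LLr_recIn (O : ℕ → ℕ) : NatRecursiveIn O ↑(LLr O) := by
  refine recIn_of_eq (NatRecursiveIn.comp
    (NatRecursiveIn.prec (recIn_total (Computable.const 1)) (llStep_recIn O))
    (recIn_total (Primrec.to_comp (Primrec₂.natPair.comp (Primrec.const 0) Primrec.id))))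
    (fun t => ?_)
  simp only [PFun.coe_val, Part.bind_eq_bind, Part.bind_some, id]
  have h2 : ∀ u : ℕ, (Nat.unpaired fun a n =>
      n.rec ((↑(fun _ : ℕ => (1 : ℕ)) : ℕ →. ℕ) a) fun y IH => do
        let i ← IH; llStep O (Nat.pair a (Nat.pair y i))) (Nat.pair 0 u) =
      Part.some (LLr O u) := by
    intro u
    induction u with
    | zero =>
        simp only [Nat.unpaired, Nat.unpair_pair, Nat.rec_zero, LLr_zero]
        rfl
    | succ u ih =>
        simp only [Nat.unpaired, Nat.unpair_pair] at ih ⊢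
        rw [ih, Part.bind_eq_bind, Part.bind_some, llStep_val, LLr_head, LLr_succ]
  exact (h2 t).trans (congrArg Part.some rfl)

/-! ### The plain stage functions, primitive recursive in the coded segment list -/

def u1 : ℕ → ℕ := fun x => x.unpair.1
def u2 : ℕ → ℕ := fun x => x.unpair.2

theorem primrec_u1 : Primrec u1 := Primrec.fst.comp Primrec.unpair
theorem primrec_u2 : Primrec u2 := Primrec.snd.comp Primrec.unpair

theorem u1_pair (a b : ℕ) : u1 (Nat.pair a b) = a := by simp [u1]
theorem u2_pair (a b : ℕ) : u2 (Nat.pair a b) = b := by simp [u2]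

def pDp (cq : Code) : ℕ → Bool := fun v =>
  bAny (u1 (u2 v) + 1) fun s => bAny (u1 (u2 v) + 1) fun k =>
    (Nat.Partrec.Code.evaln s cq (Nat.pair
      (((Denumerable.ofNat (List ℕ) (u2 (u2 v))).reverse[k]?).getD 0)
      (u1 v))).isSome

theorem bool_eq_of_iff {a b : Bool} (h : a = true ↔ b = true) : a = b := by
  cases a <;> cases b <;> simp_all

set_option maxHeartbeats 1000000 in
theorem pDp_eq (O : ℕ → ℕ) (c : CodeO) (n t : ℕ) :
    pDp (tr c) (Nat.pair n (Nat.pair t (LLr O t))) = dD O c n t := by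
  apply bool_eq_of_iff
  rw [dD_iff]
  simp only [pDp, u1_pair, u2_pair, bAny_iff, Nat.lt_succ_iff]
  constructor
  · rintro ⟨s, hs, k, hk, hv⟩
    rw [LLr_get O hk] at hv
    exact ⟨s, hs, k, hk, hv⟩
  · rintro ⟨s, hs, k, hk, hv⟩
    refine ⟨s, hs, k, hk, ?_⟩
    rw [LLr_get O hk]
    exact hv

def pFp (cq : Code) : ℕ → ℕ := fun y =>
  bMax (u1 y + 1) fun n => if pDp cq (Nat.pair n y) then n + 1 else 0

theorem bMax_congr {t : ℕ} {f g : ℕ → ℕ} (h : ∀ s, f s = g s) :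
    bMax t f = bMax t g := by rw [funext h]

set_option maxHeartbeats 1000000 in
theorem pFp_eq (O : ℕ → ℕ) (c : CodeO) (t : ℕ) :
    pFp (tr c) (Nat.pair t (LLr O t)) = FF O c t := by
  show bMax (u1 (Nat.pair t (LLr O t)) + 1) _ = bMax (t + 1) _
  rw [u1_pair]
  exact bMax_congr fun n => by rw [pDp_eq]

/-! ### Primitive recursiveness of the stage functions -/

theorem primrec_bAny {α} [Primcodable α] {t : α → ℕ} {p : α → ℕ → Bool}
    (ht : Primrec t) (hp : Primrec₂ p) : Primrec fun a => bAny (t a) (p a) := by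
  have h := Primrec.list_foldr (Primrec.list_map (Primrec.list_range.comp ht) hp)
    (Primrec.const false)
    (((Primrec.dom_bool₂ (· || ·)).comp (Primrec.fst.comp Primrec.snd)
      (Primrec.snd.comp Primrec.snd)).to₂)
  exact h.of_eq fun a => rfl

theorem primrec_bMax {α} [Primcodable α] {t : α → ℕ} {g : α → ℕ → ℕ}
    (ht : Primrec t) (hg : Primrec₂ g) : Primrec fun a => bMax (t a) (g a) := by
  have h := Primrec.list_foldr (Primrec.list_map (Primrec.list_range.comp ht) hg)
    (Primrec.const 0)
    ((Primrec.nat_max.comp (Primrec.fst.comp Primrec.snd)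
      (Primrec.snd.comp Primrec.snd)).to₂)
  exact h.of_eq fun a => rfl

theorem pDp_primrec (cq : Code) : Primrec (pDp cq) := by
  have h1 : Primrec₂ fun (q : ℕ × ℕ) (k : ℕ) =>
      (Nat.Partrec.Code.evaln q.2 cq (Nat.pair
        (((Denumerable.ofNat (List ℕ) (u2 (u2 q.1))).reverse[k]?).getD 0)
        (u1 q.1))).isSome := by
    have hlook : Primrec fun z : (ℕ × ℕ) × ℕ =>
        (((Denumerable.ofNat (List ℕ) (u2 (u2 z.1.1))).reverse[z.2]?).getD 0) :=
      Primrec.option_getD.comp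
        (Primrec.list_getElem?.comp
          (Primrec.list_reverse.comp ((Primrec.ofNat (List ℕ)).comp
            ((primrec_u2.comp primrec_u2).comp (Primrec.fst.comp Primrec.fst))))
          Primrec.snd)
        (Primrec.const 0)
    exact (Primrec.option_isSome.comp
      (Nat.Partrec.Code.primrec_evaln.comp
        ((((Primrec.snd.comp Primrec.fst).pair (Primrec.const cq))).pair
          (Primrec₂.natPair.comp hlook
            (primrec_u1.comp (Primrec.fst.comp Primrec.fst)))))).to₂
  have h2 : Primrec₂ fun (v s : ℕ) => bAny (u1 (u2 v) + 1) fun k =>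
      (Nat.Partrec.Code.evaln s cq (Nat.pair
        (((Denumerable.ofNat (List ℕ) (u2 (u2 v))).reverse[k]?).getD 0)
        (u1 v))).isSome := by
    have := primrec_bAny (α := ℕ × ℕ)
      (t := fun q => u1 (u2 q.1) + 1)
      (p := fun q k => (Nat.Partrec.Code.evaln q.2 cq (Nat.pair
        (((Denumerable.ofNat (List ℕ) (u2 (u2 q.1))).reverse[k]?).getD 0)
        (u1 q.1))).isSome)
      (Primrec.succ.comp ((primrec_u1.comp primrec_u2).comp Primrec.fst)) h1
    exact this.to₂
  exact (primrec_bAny (Primrec.succ.comp (primrec_u1.comp primrec_u2)) h2).of_eq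
    fun v => rfl

theorem pFp_primrec (cq : Code) : Primrec (pFp cq) := by
  have hcond : Primrec₂ fun (y n : ℕ) => if pDp cq (Nat.pair n y) then n + 1 else 0 := by
    have hb : Primrec fun q : ℕ × ℕ => pDp cq (Nat.pair q.2 q.1) :=
      (pDp_primrec cq).comp (Primrec₂.natPair.comp Primrec.snd Primrec.fst)
    exact (Primrec.cond hb (Primrec.succ.comp Primrec.snd) (Primrec.const 0)).to₂.of_eq
      fun y n => by rcases pDp cq (Nat.pair n y) <;> simp
  exact (primrec_bMax (Primrec.succ.comp primrec_u1) hcond).of_eq fun y => rfl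

/-! ### Final assembly: the characteristic function of `CC` is computable in `O` -/

def g1 (cq : Code) : ℕ → ℕ := fun z =>
  if u1 (u1 z) + 1 ≤ pFp cq (Nat.pair (u2 (u1 z)) (u2 z)) then 0 else 1

def g2 (cq : Code) : ℕ → ℕ := fun z =>
  if pFp cq (Nat.pair (u2 (u1 z)) (u2 z)) = u1 (u1 z) + 1 then 1 else 0

theorem g1_computable (cq : Code) : Computable (g1 cq) := by
  apply Primrec.to_comp
  exact Primrec.ite
    (Primrec.nat_le.comp (Primrec.succ.comp (primrec_u1.comp primrec_u1))
      ((pFp_primrec cq).comp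
        (Primrec₂.natPair.comp (primrec_u2.comp primrec_u1) primrec_u2)))
    (Primrec.const 0) (Primrec.const 1)

theorem g2_computable (cq : Code) : Computable (g2 cq) := by
  apply Primrec.to_comp
  exact Primrec.ite
    (Primrec.eq.comp
      ((pFp_primrec cq).comp
        (Primrec₂.natPair.comp (primrec_u2.comp primrec_u1) primrec_u2))
      (Primrec.succ.comp (primrec_u1.comp primrec_u1)))
    (Primrec.const 1) (Primrec.const 0)

/-- Pair the input with the coded segment list at its second component. -/
def pairLL (O : ℕ → ℕ) : ℕ →. ℕ := fun x =>
  Nat.pair <$> (↑(id : ℕ → ℕ) : ℕ →. ℕ) x <*> ((↑u2 : ℕ →. ℕ) x >>= (↑(LLr O) : ℕ →. ℕ))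

theorem pairLL_recIn (O : ℕ → ℕ) : NatRecursiveIn O (pairLL O) :=
  NatRecursiveIn.pair (recIn_total Computable.id)
    (NatRecursiveIn.comp (LLr_recIn O) (recIn_total (Primrec.to_comp primrec_u2)))

theorem pairLL_val (O : ℕ → ℕ) (x : ℕ) :
    pairLL O x = Part.some (Nat.pair x (LLr O (u2 x))) := by
  simp [pairLL, Seq.seq, PFun.coe_val, Part.bind_some, pbind_some]

def fIn (O : ℕ → ℕ) (cq : Code) : ℕ →. ℕ := fun x =>
  pairLL O x >>= (↑(g1 cq) : ℕ →. ℕ)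

theorem fIn_recIn (O : ℕ → ℕ) (cq : Code) : NatRecursiveIn O (fIn O cq) :=
  NatRecursiveIn.comp (recIn_total (g1_computable cq)) (pairLL_recIn O)

set_option maxHeartbeats 1000000 in
theorem fIn_val (O : ℕ → ℕ) (c : CodeO) (n j : ℕ) :
    fIn O (tr c) (Nat.pair n j) =
      Part.some (if n + 1 ≤ FF O c j then 0 else 1) := by
  rw [fIn, pairLL_val, pbind_some, PFun.coe_val]
  rw [u2_pair]
  apply congrArg
  rw [g1]
  rw [u1_pair, u2_pair, u1_pair, u2_pair, pFp_eq]

set_option maxHeartbeats 1000000 in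
theorem TT_val (O : ℕ → ℕ) (c : CodeO) {n : ℕ} (hex : ∃ t, n + 1 ≤ FF O c t) :
    (Nat.rfind fun j => (fun m => m = 0) <$> fIn O (tr c) (Nat.pair n j)) =
      Part.some (Nat.find hex) := by
  apply Part.eq_some_iff.mpr
  refine Nat.mem_rfind.mpr ?_
  constructor
  · rw [fIn_val, if_pos (Nat.find_spec hex)]
    simp
  · intro m hm
    rw [fIn_val, if_neg (Nat.find_min hex hm)]
    simp

set_option maxHeartbeats 1000000 in
theorem charFun_CC_recIn (O : ℕ → ℕ) (c : CodeO)
    (hinf : {n | (evalo (↑O) c n).Dom}.Infinite) :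
    NatRecursiveIn O ↑(charFun (CC O c)) := by
  refine recIn_of_eq
    (NatRecursiveIn.comp
      (NatRecursiveIn.comp (recIn_total (g2_computable (tr c))) (pairLL_recIn O))
      (NatRecursiveIn.pair (recIn_total Computable.id)
        (NatRecursiveIn.rfind (fIn_recIn O (tr c)))))
    (fun n => ?_)
  have hex : ∃ t, n + 1 ≤ FF O c t := FF_unbounded O c hinf n
  rw [TT_val O c hex]
  have hid : (↑(id : ℕ → ℕ) : ℕ →. ℕ) n = Part.some n := rfl
  rw [hid]
  have hseq : (Nat.pair <$> Part.some n <*> Part.some (Nat.find hex)) =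
      Part.some (Nat.pair n (Nat.find hex)) := by simp [Seq.seq]
  rw [hseq, Part.bind_eq_bind, Part.bind_some, pairLL_val, pbind_some,
    PFun.coe_val, u2_pair]
  rw [PFun.coe_val]
  apply congrArg
  rw [g2]
  rw [u1_pair, u2_pair, u1_pair, u2_pair, pFp_eq]
  have hmem : n ∈ CC O c ↔ FF O c (Nat.find hex) = n + 1 :=
    CC_mem_iff' O c (Nat.find_spec hex) (fun u hu => Nat.find_min hex hu)
  rw [charFun]
  by_cases h : FF O c (Nat.find hex) = n + 1
  · rw [if_pos h, if_pos (hmem.mpr h)]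
  · rw [if_neg h, if_neg (fun hc => h (hmem.mp hc))]

end Stmt7

/-- If `B` is introreducible and some infinite `Y ⊆ B` is c.e.
relative to `f`, then `B` is Turing reducible to `f`. -/
theorem stmt_7 (B : Set ℕ) (hB : Introreducible B) (f : ℕ → ℕ)
    (Y : Set ℕ) (hYB : Y ⊆ B) (hYinf : Y.Infinite)
    (hYce : ∃ p : ℕ →. ℕ, NatRecursiveIn f p ∧ Y = {n | (p n).Dom}) :
    NatTuringReducible (charFun B) f := by
  obtain ⟨p, hp, hYdef⟩ := hYce
  obtain ⟨c, hc⟩ := Stmt7.exists_codeO hp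
  have hdom : {n | (Stmt7.evalo (↑f) c n).Dom} = Y := by
    rw [hc]; exact hYdef.symm
  have hinf : {n | (Stmt7.evalo (↑f) c n).Dom}.Infinite := by
    rw [hdom]; exact hYinf
  have hCsub : Stmt7.CC f c ⊆ B := fun n hn =>
    hYB (hdom ▸ Stmt7.CC_subset f c hn)
  have hCinf : (Stmt7.CC f c).Infinite := Stmt7.CC_infinite f c hinf
  have hBC : NatTuringReducible (charFun B) (charFun (Stmt7.CC f c)) :=
    hB.2 (Stmt7.CC f c) hCsub hCinf
  have hCf : NatTuringReducible (charFun (Stmt7.CC f c)) f :=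
    Stmt7.charFun_CC_recIn f c hinf
  exact hBC.trans hCf
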